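/- Let A be an M × N real matrix with nonnegative entries, where M < N. Define F_A(λ_1,...,λ_N) = Σ_{S ⊆ {1,...,N}, |S| = M} per(A_S) · Π_{j ∈ S} λ_j, where A_S is the submatrix of A on columns S and per denotes the permanent. Then F_A, viewed as a polynomial with complex arguments, is either identically zero or H-stable: if F_A is not the zero polynomial, then F_A(z_1,...,z_N) ≠ 0 whenever Re(z_j) > 0 for all 1 ≤ j ≤ N. -/

import Mathlib

open Polynomial Finset

noncomputable section

/-- The permanent of a square real matrix. -/
noncomputable def permanent {n : ℕ} (B : Matrix (Fin n) (Fin n) ℝ) : ℝ :=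
  ∑ σ : Equiv.Perm (Fin n), ∏ i, B i (σ i)

/-- A multivariate real polynomial is H-stable if it does not vanish at any point
all of whose coordinates have positive real part. -/
def Hstable {σ : Type*} (p : MvPolynomial σ ℝ) : Prop :=
  ∀ z : σ → ℂ, (∀ i, 0 < (z i).re) → MvPolynomial.aeval z p ≠ 0

/-- The polynomial `F_A = Σ_{|S| = M} per(A_S) Π_{j ∈ S} X_j`. -/
noncomputable def FApoly {M N : ℕ} (A : Matrix (Fin M) (Fin N) ℝ) :
    MvPolynomial (Fin N) ℝ :=
  ∑ S ∈ (Finset.powersetCard M (Finset.univ : Finset (Fin N))).attach,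
    MvPolynomial.C (permanent (Matrix.of fun i k =>
      A i ((S.1.orderIsoOfFin ((Finset.mem_powersetCard.mp S.2).2)) k))) *
      ∏ j ∈ S.1, MvPolynomial.X j

/-- the complex absolute value, as an absolute value -/
noncomputable def Complex.abs : AbsoluteValue ℂ ℝ where
  toFun z := ‖z‖
  map_mul' := norm_mul
  nonneg' := norm_nonneg
  eq_zero' _ := norm_eq_zero
  add_le' := norm_add_le

@[simp] lemma Complex.abs_apply (z : ℂ) : Complex.abs z = ‖z‖ := rfl

lemma Complex.abs_ofReal (r : ℝ) : Complex.abs (r : ℂ) = |r| := by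
  rw [Complex.abs_apply, Complex.norm_real, Real.norm_eq_abs]

/-- roots of a polynomial nonvanishing on the open right half plane have nonpositive real part -/
lemma root_re_nonpos (q : Polynomial ℂ) (hq : ∀ x : ℂ, 0 < x.re → q.eval x ≠ 0)
    {r : ℂ} (hr : q.IsRoot r) : r.re ≤ 0 := by
  by_contra h
  exact hq r (by linarith) hr

/-- If `q` does not vanish on the open right half plane, then `Re (q'(w)/q(w)) ≥ 0` there. -/
lemma re_logderiv_nonneg (n : ℕ) : ∀ q : Polynomial ℂ, q.natDegree = n → q ≠ 0 →
    (∀ x : ℂ, 0 < x.re → q.eval x ≠ 0) → ∀ w : ℂ, 0 < w.re →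
    0 ≤ ((q.derivative.eval w) / (q.eval w)).re := by
  induction n using Nat.strong_induction_on with
  | _ n ih =>
    intro q hdeg hq0 hq w hw
    rcases Nat.eq_zero_or_pos n with hn | hn
    · -- degree 0 : q is a constant
      have : q.natDegree = 0 := hdeg ▸ hn
      rw [Polynomial.eq_C_of_natDegree_eq_zero this]
      simp
    · -- positive degree: extract a root
      have hdegpos : 0 < q.degree := by
        rw [Polynomial.degree_eq_natDegree hq0]
        exact_mod_cast hdeg ▸ hn
      obtain ⟨r, hr⟩ := Complex.exists_root hdegpos
      have hre : r.re ≤ 0 := root_re_nonpos q hq hr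
      obtain ⟨q₁, hq₁⟩ := Polynomial.dvd_iff_isRoot.mpr hr
      have hq₁0 : q₁ ≠ 0 := by
        rintro rfl; rw [mul_zero] at hq₁; exact hq0 hq₁
      have hXr : (Polynomial.X - Polynomial.C r) ≠ 0 := Polynomial.X_sub_C_ne_zero r
      have hdeg₁ : q₁.natDegree = n - 1 := by
        have := Polynomial.natDegree_mul hXr hq₁0
        rw [← hq₁, hdeg, Polynomial.natDegree_X_sub_C] at this
        omega
      have hq₁rhp : ∀ x : ℂ, 0 < x.re → q₁.eval x ≠ 0 := by
        intro x hx hx0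
        exact hq x hx (by rw [hq₁]; simp [hx0])
      have ihq₁ := ih (n-1) (by omega) q₁ hdeg₁ hq₁0 hq₁rhp w hw
      have hqw : q.eval w ≠ 0 := hq w hw
      have hq₁w : q₁.eval w ≠ 0 := hq₁rhp w hw
      have hwr : w - r ≠ 0 := by
        intro h
        have : w = r := by linear_combination h
        rw [this] at hw; linarith
      have hsplit : (q.derivative.eval w) / (q.eval w)
          = 1 / (w - r) + (q₁.derivative.eval w) / (q₁.eval w) := by
        rw [hq₁]
        rw [Polynomial.derivative_mul]
        simp only [Polynomial.derivative_sub, Polynomial.derivative_X, Polynomial.derivative_C,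
          sub_zero, one_mul, Polynomial.eval_add, Polynomial.eval_mul, Polynomial.eval_sub,
          Polynomial.eval_X, Polynomial.eval_C]
        field_simp
      rw [hsplit, Complex.add_re]
      have h1 : 0 ≤ (1 / (w - r)).re := by
        rw [one_div, Complex.inv_re]
        have h2 : 0 < (w - r).re := by
          rw [Complex.sub_re]; linarith
        exact div_nonneg h2.le (Complex.normSq_nonneg _)
      linarith

/-- Key operator lemma: if `q` doesn't vanish on RHP, `Re w > 0`, `Re z > 0`,
then `q(w) + z q'(w) ≠ 0`. -/
lemma L1 (q : Polynomial ℂ) (hq : ∀ x : ℂ, 0 < x.re → q.eval x ≠ 0)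
    {w z : ℂ} (hw : 0 < w.re) (hz : 0 < z.re) :
    q.eval w + z * q.derivative.eval w ≠ 0 := by
  have hqw : q.eval w ≠ 0 := hq w hw
  have hq0 : q ≠ 0 := fun h => hqw (by rw [h]; simp)
  have hρ := re_logderiv_nonneg q.natDegree q rfl hq0 hq w hw
  set ρ := (q.derivative.eval w) / (q.eval w) with hρdef
  have hmul : q.eval w * ρ = q.derivative.eval w := by
    rw [hρdef]; field_simp
  have hfact : q.eval w + z * q.derivative.eval w = q.eval w * (1 + z * ρ) := by
    rw [mul_add, mul_one, mul_comm z ρ, ← mul_assoc, hmul, mul_comm]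
  rw [hfact]
  refine mul_ne_zero hqw ?_
  intro h
  have hzρ : z * ρ = -1 := by linear_combination h
  have hρ0 : ρ ≠ 0 := by
    intro h0; rw [h0, mul_zero] at hzρ; exact (by norm_num : (0:ℂ) ≠ -1) hzρ
  have hz0 : z ≠ 0 := by
    rintro rfl; rw [zero_mul] at hzρ; exact (by norm_num : (0:ℂ) ≠ -1) hzρ
  have : ρ = -1 / z := by field_simp at hzρ ⊢; linear_combination hzρ
  rw [this] at hρ
  rw [Complex.div_re] at hρ
  simp only [Complex.neg_re, Complex.neg_im, Complex.one_re, Complex.one_im, neg_zero] at hρ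
  have hnsq : 0 < Complex.normSq z := Complex.normSq_pos.mpr hz0
  have him : z.im * 0 = 0 := by ring
  -- hρ : 0 ≤ (-1 * z.re)/normSq z + (-0 * z.im)/normSq z  roughly
  have : 0 ≤ (-z.re) / Complex.normSq z := by
    convert hρ using 1
    field_simp
    ring
  have := (div_nonneg_iff.mp this)
  rcases this with ⟨h1, _⟩ | ⟨_, h2⟩
  · linarith
  · linarith




lemma multiset_prod_map_le (f g : ℂ → ℝ) : ∀ (m : Multiset ℂ), (∀ r ∈ m, 0 ≤ f r) →
    (∀ r ∈ m, f r ≤ g r) → (m.map f).prod ≤ (m.map g).prod := by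
  intro m
  induction m using Multiset.induction_on with
  | empty => intro _ _; simp
  | @cons x s ih =>
    intro hf h
    simp only [Multiset.map_cons, Multiset.prod_cons]
    have hfs : ∀ r ∈ s, 0 ≤ f r := fun r hr => hf r (Multiset.mem_cons_of_mem hr)
    have hs : ∀ r ∈ s, f r ≤ g r := fun r hr => h r (Multiset.mem_cons_of_mem hr)
    have hprodf : (0:ℝ) ≤ (s.map f).prod := by
      apply Multiset.prod_nonneg
      intro a ha
      obtain ⟨r, hr, rfl⟩ := Multiset.mem_map.mp ha
      exact hfs r hr
    have hx0 : 0 ≤ f x := hf x (Multiset.mem_cons_self x s)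
    have hx : f x ≤ g x := h x (Multiset.mem_cons_self x s)
    calc f x * (s.map f).prod ≤ g x * (s.map f).prod :=
        mul_le_mul_of_nonneg_right hx hprodf
      _ ≤ g x * (s.map g).prod := by
        apply mul_le_mul_of_nonneg_left (ih hfs hs) (le_trans hx0 hx)

/-- If all roots of `p` have modulus `> δ`, then on the disc of radius `δ/2` the values of `p`
are bounded by `(3/2)^deg` times the value at `0`. -/
lemma value_bound (p : Polynomial ℂ) {δ : ℝ} (hδ : 0 < δ)
    (hroots : ∀ r : ℂ, p.IsRoot r → δ < Complex.abs r)
    {s : ℂ} (hs : Complex.abs s ≤ δ / 2) :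
    Complex.abs (p.eval s) ≤ (3/2 : ℝ) ^ p.natDegree * Complex.abs (p.eval 0) := by
  have hsplit : Multiset.card p.roots = p.natDegree :=
    Polynomial.splits_iff_card_roots.mp (IsAlgClosed.splits p)
  have hfact := Polynomial.C_leadingCoeff_mul_prod_multiset_X_sub_C hsplit
  have hvs : ∀ x : ℂ, Complex.abs (p.eval x)
      = Complex.abs p.leadingCoeff * (p.roots.map (fun r => Complex.abs (x - r))).prod := by
    intro x
    conv_lhs => rw [← hfact]
    rw [Polynomial.eval_mul, Polynomial.eval_C, map_mul]
    congr 1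
    rw [Polynomial.eval_multiset_prod, Multiset.map_map, map_multiset_prod, Multiset.map_map]
    congr 1
    apply Multiset.map_congr rfl
    intro r _
    simp
  rw [hvs s, hvs 0]
  rw [← hsplit]
  have hb : (p.roots.map (fun r => Complex.abs (s - r))).prod
      ≤ (p.roots.map (fun r => (3/2 : ℝ) * Complex.abs (0 - r))).prod := by
    apply multiset_prod_map_le
    · intro r hr
      positivity
    · intro r hr
      have hrr : δ < Complex.abs r := hroots r (Polynomial.isRoot_of_mem_roots hr)
      calc Complex.abs (s - r) ≤ Complex.abs s + Complex.abs r := by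
             simpa [sub_eq_add_neg] using Complex.abs.add_le s (-r)
        _ ≤ δ/2 + Complex.abs r := by linarith
        _ ≤ Complex.abs r / 2 + Complex.abs r := by linarith
        _ = (3/2 : ℝ) * Complex.abs (0 - r) := by
             rw [zero_sub, AbsoluteValue.map_neg]; ring
  have hmul : (p.roots.map (fun r => (3/2 : ℝ) * Complex.abs (0 - r))).prod
      = (3/2 : ℝ) ^ Multiset.card p.roots * (p.roots.map (fun r => Complex.abs (0 - r))).prod := by
    rw [show (fun r : ℂ => (3/2 : ℝ) * Complex.abs (0 - r))
        = (fun r : ℂ => (fun _ => (3/2:ℝ)) r * (fun t => Complex.abs (0 - t)) r) from rfl,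
      Multiset.prod_map_mul]
    congr 1
    simp [Multiset.map_const']
  calc Complex.abs p.leadingCoeff * (p.roots.map (fun r => Complex.abs (s - r))).prod
      ≤ Complex.abs p.leadingCoeff * ((3/2 : ℝ) ^ Multiset.card p.roots
          * (p.roots.map (fun r => Complex.abs (0 - r))).prod) := by
        rw [← hmul]
        exact mul_le_mul_of_nonneg_left hb (by positivity)
    _ = (3/2 : ℝ) ^ Multiset.card p.roots
          * (Complex.abs p.leadingCoeff * (p.roots.map (fun r => Complex.abs (0 - r))).prod) := by
        ring

/-- Finset version of `Polynomial.derivative_prod`. -/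
lemma derivative_finset_prod {ι : Type*} [DecidableEq ι] (s : Finset ι) (f : ι → Polynomial ℂ) :
    Polynomial.derivative (∏ i ∈ s, f i)
      = ∑ i ∈ s, (∏ j ∈ s.erase i, f j) * Polynomial.derivative (f i) := by
  induction s using Finset.induction_on with
  | empty => simp
  | insert a t ha ih =>
    rw [Finset.prod_insert ha, Polynomial.derivative_mul, ih, Finset.sum_insert ha,
      Finset.erase_insert ha, Finset.mul_sum]
    have h1 : Polynomial.derivative (f a) * ∏ j ∈ t, f j
        = (∏ j ∈ t, f j) * Polynomial.derivative (f a) := mul_comm _ _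
    rw [h1]
    congr 1
    apply Finset.sum_congr rfl
    intro i hi
    rw [Finset.erase_insert_of_ne (by rintro rfl; exact ha hi),
      Finset.prod_insert (fun h => ha (Finset.erase_subset _ _ h))]
    ring

namespace FAstab

variable {M N : ℕ} (A : Matrix (Fin M) (Fin N) ℝ)

/-- the linear form given by row `i` of `A` -/
def lf (i : Fin M) (w : Fin N → ℂ) : ℂ := ∑ j, (A i j : ℂ) * w j

/-- partial injections from `Fin M` to the subset `K` of `Fin N`, encoded with `Option` -/
def PJ (M : ℕ) (K : Finset (Fin N)) : Finset (Fin M → Option (Fin N)) :=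
  Finset.univ.filter (fun f => (∀ i j, f i = some j → j ∈ K) ∧
    (∀ i i' j, f i = some j → f i' = some j → i = i'))

lemma mem_PJ_iff {K : Finset (Fin N)} {f : Fin M → Option (Fin N)} :
    f ∈ PJ M K ↔ (∀ i j, f i = some j → j ∈ K) ∧
      (∀ i i' j, f i = some j → f i' = some j → i = i') := by
  simp [PJ]

/-- the factor attached to row `i` by the partial injection `f` -/
def tm (z w : Fin N → ℂ) (f : Fin M → Option (Fin N)) (i : Fin M) : ℂ :=
  (f i).elim (lf A i w) (fun j => (A i j : ℂ) * z j)

/-- the intermediate polynomial obtained from `∏ᵢ ℓᵢ(w)` by applying `∏_{j ∈ K} (1 + zⱼ ∂ⱼ)` -/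
def GK (K : Finset (Fin N)) (z w : Fin N → ℂ) : ℂ :=
  ∑ f ∈ PJ M K, ∏ i, tm A z w f i

lemma PJ_empty : PJ M (∅ : Finset (Fin N)) = {fun _ => none} := by
  ext f
  simp only [mem_PJ_iff, Finset.mem_singleton, Finset.notMem_empty]
  constructor
  · rintro ⟨h1, _⟩
    funext i
    cases hfi : f i with
    | none => rfl
    | some j => exact absurd (h1 i j hfi) (by simp)
  · rintro rfl
    exact ⟨fun i j h => by simp at h, fun i i' j h => by simp at h⟩

lemma GK_empty (z w : Fin N → ℂ) : GK A ∅ z w = ∏ i, lf A i w := by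
  rw [GK, PJ_empty, Finset.sum_singleton]
  apply Finset.prod_congr rfl
  intro i _
  rfl

/-- univariate polynomial in the variable `w j`, representing `GK A K z w` -/
def tmp (j : Fin N) (z w : Fin N → ℂ) (f : Fin M → Option (Fin N)) (i : Fin M) : Polynomial ℂ :=
  (f i).elim
    (Polynomial.C (∑ j' ∈ Finset.univ.erase j, (A i j' : ℂ) * w j')
      + Polynomial.C ((A i j : ℂ)) * Polynomial.X)
    (fun j' => Polynomial.C ((A i j' : ℂ) * z j'))

def Qp (K : Finset (Fin N)) (j : Fin N) (z w : Fin N → ℂ) : Polynomial ℂ :=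
  ∑ f ∈ PJ M K, ∏ i, tmp A j z w f i

lemma tmp_eval (j : Fin N) (z w : Fin N → ℂ) (f : Fin M → Option (Fin N)) (i : Fin M) (x : ℂ) :
    (tmp A j z w f i).eval x = tm A z (Function.update w j x) f i := by
  cases hfi : f i with
  | some j' => simp [tmp, tm, hfi]
  | none =>
    simp only [tmp, tm, hfi, Option.elim, Polynomial.eval_add, Polynomial.eval_C,
      Polynomial.eval_mul, Polynomial.eval_X]
    rw [lf, ← Finset.add_sum_erase _ _ (Finset.mem_univ j)]
    rw [Function.update_self]
    rw [add_comm]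
    congr 1
    apply Finset.sum_congr rfl
    intro j' hj'
    rw [Function.update_of_ne (Finset.ne_of_mem_erase hj')]

lemma Qp_eval (K : Finset (Fin N)) (j : Fin N) (z w : Fin N → ℂ) (x : ℂ) :
    (Qp A K j z w).eval x = GK A K z (Function.update w j x) := by
  rw [Qp, GK, Polynomial.eval_finset_sum]
  apply Finset.sum_congr rfl
  intro f _
  rw [Polynomial.eval_prod]
  exact Finset.prod_congr rfl fun i _ => tmp_eval A j z w f i x

lemma tmp_derivative (j : Fin N) (z w : Fin N → ℂ) (f : Fin M → Option (Fin N)) (i : Fin M) :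
    Polynomial.derivative (tmp A j z w f i)
      = (f i).elim (Polynomial.C ((A i j : ℂ))) (fun _ => 0) := by
  cases hfi : f i with
  | some j' => simp [tmp, hfi]
  | none => simp [tmp, hfi]

/-- The key recursion -/
lemma GK_insert (K : Finset (Fin N)) {j : Fin N} (hj : j ∉ K) (z w : Fin N → ℂ) :
    GK A (insert j K) z w
      = (Qp A K j z w).eval (w j) + z j * (Qp A K j z w).derivative.eval (w j) := by
  have hQe : (Qp A K j z w).eval (w j) = GK A K z w := by
    rw [Qp_eval, Function.update_eq_self]
  -- compute the derivative term
  have hQd : z j * (Qp A K j z w).derivative.eval (w j)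
      = ∑ g ∈ PJ M K, ∑ i ∈ Finset.univ.filter (fun i => g i = none),
          (A i j : ℂ) * z j * ∏ i' ∈ Finset.univ.erase i, tm A z w g i' := by
    rw [Qp, Polynomial.derivative_sum, Polynomial.eval_finset_sum, Finset.mul_sum]
    apply Finset.sum_congr rfl
    intro g _
    rw [derivative_finset_prod, Polynomial.eval_finset_sum, Finset.mul_sum]
    rw [Finset.sum_filter]
    apply Finset.sum_congr rfl
    intro i _
    rw [Polynomial.eval_mul, tmp_derivative]
    cases hgi : g i with
    | some j' => simp [hgi]
    | none =>
      simp only [hgi, Option.elim, Polynomial.eval_C, if_pos]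
      rw [Polynomial.eval_prod]
      have : ∏ i' ∈ Finset.univ.erase i, (tmp A j z w g i').eval (w j)
          = ∏ i' ∈ Finset.univ.erase i, tm A z w g i' := by
        apply Finset.prod_congr rfl
        intro i' _
        rw [tmp_eval, Function.update_eq_self]
      rw [this]
      ring
  rw [hQe, hQd]
  -- now split the sum defining `GK A (insert j K) z w`
  rw [GK, ← Finset.sum_filter_add_sum_filter_not (PJ M (insert j K)) (fun f => ∀ i, f i ≠ some j)]
  have hfilter : (PJ M (insert j K)).filter (fun f => ∀ i, f i ≠ some j) = PJ M K := by
    ext f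
    simp only [Finset.mem_filter, mem_PJ_iff]
    constructor
    · rintro ⟨⟨h1, h2⟩, h3⟩
      refine ⟨fun i j' hij' => ?_, h2⟩
      have := h1 i j' hij'
      rcases Finset.mem_insert.mp this with h | h
      · exact absurd (h ▸ hij') (h3 i)
      · exact h
    · rintro ⟨h1, h2⟩
      refine ⟨⟨fun i j' hij' => Finset.mem_insert_of_mem (h1 i j' hij'), h2⟩, ?_⟩
      intro i hij
      exact hj (h1 i j hij)
  rw [hfilter]
  congr 1
  -- rewrite the `j`-hitting part as a double sum
  have hA : ∑ f ∈ (PJ M (insert j K)).filter (fun f => ¬ ∀ i, f i ≠ some j), ∏ i, tm A z w f i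
      = ∑ f ∈ PJ M (insert j K),
          ∑ i ∈ Finset.univ.filter (fun i => f i = some j), ∏ i', tm A z w f i' := by
    rw [← Finset.sum_filter_add_sum_filter_not (PJ M (insert j K)) (fun f => ∀ i, f i ≠ some j)
      (fun f => ∑ i ∈ Finset.univ.filter (fun i => f i = some j), ∏ i', tm A z w f i')]
    have h0 : ∑ f ∈ (PJ M (insert j K)).filter (fun f => ∀ i, f i ≠ some j),
        ∑ i ∈ Finset.univ.filter (fun i => f i = some j), ∏ i', tm A z w f i' = 0 := by
      apply Finset.sum_eq_zero
      intro f hf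
      obtain ⟨_, hfn⟩ := Finset.mem_filter.mp hf
      have : Finset.univ.filter (fun i => f i = some j) = (∅ : Finset (Fin M)) := by
        apply Finset.filter_eq_empty_iff.mpr
        intro i _
        exact hfn i
      rw [this, Finset.sum_empty]
    rw [h0, zero_add]
    apply Finset.sum_congr rfl
    intro f hf
    obtain ⟨hfP, hfn⟩ := Finset.mem_filter.mp hf
    push_neg at hfn
    obtain ⟨i₀, hi₀⟩ := hfn
    have huniq : Finset.univ.filter (fun i => f i = some j) = {i₀} := by
      ext i
      simp only [Finset.mem_filter, Finset.mem_univ, true_and, Finset.mem_singleton]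
      constructor
      · intro h
        exact (mem_PJ_iff.mp hfP).2 i i₀ j h hi₀
      · rintro rfl
        exact hi₀
    rw [huniq, Finset.sum_singleton]
  rw [hA]
  rw [Finset.sum_sigma', Finset.sum_sigma']
  apply Finset.sum_nbij' (i := fun p : (_ : Fin M → Option (Fin N)) × Fin M =>
      (⟨Function.update p.1 p.2 none, p.2⟩ : (_ : Fin M → Option (Fin N)) × Fin M))
    (j := fun p : (_ : Fin M → Option (Fin N)) × Fin M =>
      (⟨Function.update p.1 p.2 (some j), p.2⟩ : (_ : Fin M → Option (Fin N)) × Fin M))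
  · -- hi : maps into the target sigma set
    rintro ⟨f, i⟩ hp
    obtain ⟨hf, hi⟩ := Finset.mem_sigma.mp hp
    obtain ⟨h1, h2⟩ := mem_PJ_iff.mp hf
    have hfi : f i = some j := (Finset.mem_filter.mp hi).2
    apply Finset.mem_sigma.mpr
    dsimp only
    constructor
    · apply mem_PJ_iff.mpr
      constructor
      · intro i' j' h'
        by_cases hii : i' = i
        · rw [hii, Function.update_self] at h'
          exact absurd h' (by simp)
        · rw [Function.update_of_ne hii] at h'
          rcases Finset.mem_insert.mp (h1 i' j' h') with hjj | hk
          · rw [hjj] at h'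
            exact absurd (h2 i' i j h' hfi) hii
          · exact hk
      · intro i1 i2 j' ha hb
        by_cases h1i : i1 = i
        · rw [h1i, Function.update_self] at ha
          exact absurd ha (by simp)
        · by_cases h2i : i2 = i
          · rw [h2i, Function.update_self] at hb
            exact absurd hb (by simp)
          · rw [Function.update_of_ne h1i] at ha
            rw [Function.update_of_ne h2i] at hb
            exact h2 i1 i2 j' ha hb
    · simp only [Finset.mem_filter, Finset.mem_univ, true_and]
      rw [Function.update_self]
  · -- hj : reverse map into source sigma set
    rintro ⟨g, i⟩ hp
    obtain ⟨hg, hi⟩ := Finset.mem_sigma.mp hp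
    obtain ⟨h1, h2⟩ := mem_PJ_iff.mp hg
    have hgi : g i = none := (Finset.mem_filter.mp hi).2
    apply Finset.mem_sigma.mpr
    dsimp only
    constructor
    · apply mem_PJ_iff.mpr
      constructor
      · intro i' j' h'
        by_cases hii : i' = i
        · rw [hii, Function.update_self] at h'
          rw [Option.some_inj] at h'
          rw [← h']
          exact Finset.mem_insert_self _ _
        · rw [Function.update_of_ne hii] at h'
          exact Finset.mem_insert_of_mem (h1 i' j' h')
      · intro i1 i2 j' ha hb
        by_cases h1i : i1 = i
        · by_cases h2i : i2 = i
          · rw [h1i, h2i]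
          · rw [h1i, Function.update_self] at ha
            rw [Function.update_of_ne h2i] at hb
            rw [Option.some_inj] at ha
            rw [← ha] at hb
            exact absurd (h1 i2 j hb) hj
        · by_cases h2i : i2 = i
          · rw [h2i, Function.update_self] at hb
            rw [Function.update_of_ne h1i] at ha
            rw [Option.some_inj] at hb
            rw [← hb] at ha
            exact absurd (h1 i1 j ha) hj
          · rw [Function.update_of_ne h1i] at ha
            rw [Function.update_of_ne h2i] at hb
            exact h2 i1 i2 j' ha hb
    · simp only [Finset.mem_filter, Finset.mem_univ, true_and]
      rw [Function.update_self]
  · -- left inverse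
    rintro ⟨f, i⟩ hp
    obtain ⟨hf, hi⟩ := Finset.mem_sigma.mp hp
    have hfi : f i = some j := (Finset.mem_filter.mp hi).2
    dsimp only
    have hfeq : Function.update (Function.update f i none) i (some j) = f := by
      funext i'
      by_cases hii : i' = i
      · subst hii
        simp [hfi]
      · simp [Function.update_of_ne hii]
    rw [hfeq]
  · -- right inverse
    rintro ⟨g, i⟩ hp
    obtain ⟨hg, hi⟩ := Finset.mem_sigma.mp hp
    have hgi : g i = none := (Finset.mem_filter.mp hi).2
    dsimp only
    have hgeq : Function.update (Function.update g i (some j)) i none = g := by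
      funext i'
      by_cases hii : i' = i
      · subst hii
        simp [hgi]
      · simp [Function.update_of_ne hii]
    rw [hgeq]
  · -- terms agree
    rintro ⟨f, i⟩ hp
    obtain ⟨hf, hi⟩ := Finset.mem_sigma.mp hp
    have hfi : f i = some j := (Finset.mem_filter.mp hi).2
    dsimp only
    rw [(Finset.mul_prod_erase Finset.univ (tm A z w f) (Finset.mem_univ i)).symm]
    have htm : tm A z w f i = (A i j : ℂ) * z j := by
      rw [tm, hfi]
      rfl
    rw [htm]
    congr 1
    apply Finset.prod_congr rfl
    intro i' hi'
    rw [tm, tm, Function.update_of_ne (Finset.ne_of_mem_erase hi')]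


lemma GK_ne_zero (hA : ∀ i j, 0 ≤ A i j) (hrow : ∀ i, ∃ j, A i j ≠ 0)
    (K : Finset (Fin N)) : ∀ (z w : Fin N → ℂ), (∀ j, 0 < (z j).re) → (∀ j, 0 < (w j).re) →
    GK A K z w ≠ 0 := by
  induction K using Finset.induction_on with
  | empty =>
    intro z w hz hw
    rw [GK_empty]
    apply Finset.prod_ne_zero_iff.mpr
    intro i _
    have hre : 0 < (lf A i w).re := by
      rw [lf, Complex.re_sum]
      apply Finset.sum_pos'
      · intro j _
        simp only [Complex.mul_re, Complex.ofReal_re, Complex.ofReal_im, zero_mul, sub_zero]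
        exact mul_nonneg (hA i j) (hw j).le
      · obtain ⟨j, hjne⟩ := hrow i
        refine ⟨j, Finset.mem_univ j, ?_⟩
        simp only [Complex.mul_re, Complex.ofReal_re, Complex.ofReal_im, zero_mul, sub_zero]
        exact mul_pos (lt_of_le_of_ne (hA i j) (Ne.symm hjne)) (hw j)
    intro h
    rw [h] at hre
    simp at hre
  | @insert j K hj ih =>
    intro z w hz hw
    rw [GK_insert A K hj z w]
    apply L1 (Qp A K j z w) ?_ (hw j) (hz j)
    intro x hx
    rw [Qp_eval]
    apply ih z (Function.update w j x) hz
    intro j'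
    by_cases h : j' = j
    · subst h
      rwa [Function.update_self]
    · rw [Function.update_of_ne h]
      exact hw j'

/-- number of unused rows -/
def kf (f : Fin M → Option (Fin N)) : ℕ := (Finset.univ.filter (fun i => f i = none)).card

/-- the monomial attached to `f`, with row sums in the unused rows -/
def mz (z : Fin N → ℂ) (f : Fin M → Option (Fin N)) : ℂ :=
  ∏ i, (f i).elim (((∑ j, A i j : ℝ) : ℂ)) (fun j => (A i j : ℂ) * z j)

lemma prod_tm_onev (z : Fin N → ℂ) (t : ℂ) (f : Fin M → Option (Fin N)) :
    ∏ i, tm A z (fun _ => t) f i = t ^ kf f * mz A z f := by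
  rw [mz, ← Finset.prod_filter_mul_prod_filter_not Finset.univ (fun i => f i = none)
      (tm A z (fun _ => t) f),
    ← Finset.prod_filter_mul_prod_filter_not Finset.univ (fun i => f i = none)
      (fun i => (f i).elim (((∑ j, A i j : ℝ) : ℂ)) (fun j => (A i j : ℂ) * z j))]
  have h1 : ∏ i ∈ Finset.univ.filter (fun i => f i = none), tm A z (fun _ => t) f i
      = t ^ kf f * ∏ i ∈ Finset.univ.filter (fun i => f i = none),
          (f i).elim (((∑ j, A i j : ℝ) : ℂ)) (fun j => (A i j : ℂ) * z j) := by
    rw [kf, ← Finset.prod_const t, ← Finset.prod_mul_distrib]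
    apply Finset.prod_congr rfl
    intro i hi
    have hfi : f i = none := (Finset.mem_filter.mp hi).2
    rw [tm, hfi]
    simp only [Option.elim]
    rw [lf]
    push_cast
    rw [← Finset.sum_mul]
    ring
  have h2 : ∏ i ∈ Finset.univ.filter (fun i => ¬ f i = none), tm A z (fun _ => t) f i
      = ∏ i ∈ Finset.univ.filter (fun i => ¬ f i = none),
          (f i).elim (((∑ j, A i j : ℝ) : ℂ)) (fun j => (A i j : ℂ) * z j) := by
    apply Finset.prod_congr rfl
    intro i hi
    have hfi : ¬ f i = none := (Finset.mem_filter.mp hi).2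
    obtain ⟨j', hj'⟩ := Option.ne_none_iff_exists'.mp hfi
    rw [tm, hj']
    rfl
  rw [h1, h2]
  ring

/-- the sum over total injections: this is the value of `F_A` -/
def Tz (z : Fin N → ℂ) : ℂ :=
  ∑ f ∈ (PJ M Finset.univ).filter (fun f => ∀ i, f i ≠ none), mz A z f

/-- the error term -/
def Ez (z : Fin N → ℂ) (t : ℂ) : ℂ :=
  ∑ f ∈ (PJ M Finset.univ).filter (fun f => ¬ ∀ i, f i ≠ none), t ^ (kf f - 1) * mz A z f

lemma GK_onev (z : Fin N → ℂ) (t : ℂ) :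
    GK A Finset.univ z (fun _ => t) = Tz A z + t * Ez A z t := by
  rw [GK]
  have : ∀ f ∈ PJ M (Finset.univ : Finset (Fin N)), ∏ i, tm A z (fun _ => t) f i
      = t ^ kf f * mz A z f := fun f _ => prod_tm_onev A z t f
  rw [Finset.sum_congr rfl this]
  rw [← Finset.sum_filter_add_sum_filter_not (PJ M Finset.univ) (fun f => ∀ i, f i ≠ none)]
  congr 1
  · rw [Tz]
    apply Finset.sum_congr rfl
    intro f hf
    have hfi : ∀ i, f i ≠ none := (Finset.mem_filter.mp hf).2
    have : kf f = 0 := by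
      rw [kf, Finset.card_eq_zero]
      apply Finset.filter_eq_empty_iff.mpr
      intro i _
      exact hfi i
    rw [this, pow_zero, one_mul]
  · rw [Ez, Finset.mul_sum]
    apply Finset.sum_congr rfl
    intro f hf
    have hfi : ¬ ∀ i, f i ≠ none := (Finset.mem_filter.mp hf).2
    push_neg at hfi
    obtain ⟨i₀, hi₀⟩ := hfi
    have hk : 1 ≤ kf f := by
      rw [kf]
      rw [show (1 : ℕ) ≤ #(Finset.univ.filter (fun i => f i = none)) ↔
        0 < #(Finset.univ.filter (fun i => f i = none)) from Iff.rfl, Finset.card_pos]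
      exact ⟨i₀, Finset.mem_filter.mpr ⟨Finset.mem_univ _, hi₀⟩⟩
    have : t ^ kf f = t * t ^ (kf f - 1) := by
      rw [← pow_succ']
      congr 1
      omega
    rw [this]
    ring


lemma aeval_FApoly (hN : 0 < N) (z : Fin N → ℂ) :
    MvPolynomial.aeval z (FApoly A) = Tz A z := by
  rw [FApoly, map_sum]
  have hterm : ∀ S ∈ (Finset.powersetCard M (Finset.univ : Finset (Fin N))).attach,
      MvPolynomial.aeval z (MvPolynomial.C (permanent (Matrix.of fun i k =>
        A i ((S.1.orderIsoOfFin ((Finset.mem_powersetCard.mp S.2).2)) k))) *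
        ∏ j ∈ S.1, MvPolynomial.X j)
      = ∑ σ : Equiv.Perm (Fin M), ∏ i,
          ((A i ((S.1.orderIsoOfFin ((Finset.mem_powersetCard.mp S.2).2)) (σ i)) : ℂ)
            * z ((S.1.orderIsoOfFin ((Finset.mem_powersetCard.mp S.2).2)) (σ i))) := by
    intro S _
    set h := (Finset.mem_powersetCard.mp S.2).2 with hh
    set oiso := S.1.orderIsoOfFin h with hoiso
    rw [map_mul, MvPolynomial.aeval_C, map_prod]
    simp only [MvPolynomial.aeval_X]
    have hper : (algebraMap ℝ ℂ) (permanent (Matrix.of fun i k => A i (oiso k)))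
        = ∑ σ : Equiv.Perm (Fin M), ∏ i, (A i (oiso (σ i)) : ℂ) := by
      rw [permanent]
      push_cast
      apply Finset.sum_congr rfl
      intro σ _
      apply Finset.prod_congr rfl
      intro i _
      rfl
    rw [hper, Finset.sum_mul]
    apply Finset.sum_congr rfl
    intro σ _
    have hzprod : ∏ j ∈ S.1, z j = ∏ i : Fin M, z (oiso (σ i)) := by
      rw [← Finset.prod_coe_sort S.1 z,
        ← Equiv.prod_comp (σ.trans oiso.toEquiv) (fun x : ↥S.1 => z ↑x)]
      rfl
    rw [hzprod, ← Finset.prod_mul_distrib]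
  rw [Finset.sum_congr rfl hterm]
  have hsp := Finset.sum_product' ((Finset.powersetCard M (Finset.univ : Finset (Fin N))).attach)
    (Finset.univ : Finset (Equiv.Perm (Fin M)))
    (fun S σ => ∏ i,
      ((A i ((S.1.orderIsoOfFin ((Finset.mem_powersetCard.mp S.2).2)) (σ i)) : ℂ)
        * z ((S.1.orderIsoOfFin ((Finset.mem_powersetCard.mp S.2).2)) (σ i))))
  rw [← hsp, Tz]
  apply Finset.sum_bij (i := fun p _ => fun k : Fin M =>
    some ((p.1.1.orderIsoOfFin ((Finset.mem_powersetCard.mp p.1.2).2) (p.2 k) : Fin N)))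
  · -- membership
    rintro ⟨S, σ⟩ -
    apply Finset.mem_filter.mpr
    constructor
    · apply mem_PJ_iff.mpr
      refine ⟨fun i j h => Finset.mem_univ j, ?_⟩
      intro i1 i2 j' ha hb
      rw [Option.some_inj] at ha hb
      have : (S.1.orderIsoOfFin ((Finset.mem_powersetCard.mp S.2).2) (σ i1))
          = (S.1.orderIsoOfFin ((Finset.mem_powersetCard.mp S.2).2) (σ i2)) :=
        Subtype.coe_injective (ha.trans hb.symm)
      exact σ.injective ((S.1.orderIsoOfFin _).injective this)
    · intro i h
      simp at h
  · -- injectivity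
    rintro ⟨S1, σ1⟩ - ⟨S2, σ2⟩ - heq
    have hfun : ∀ k, (S1.1.orderIsoOfFin ((Finset.mem_powersetCard.mp S1.2).2) (σ1 k) : Fin N)
        = (S2.1.orderIsoOfFin ((Finset.mem_powersetCard.mp S2.2).2) (σ2 k) : Fin N) := by
      intro k
      have := congrFun heq k
      rwa [Option.some_inj] at this
    have hSS : S1 = S2 := by
      apply Subtype.ext
      ext j
      constructor
      · intro hj
        have : ∃ k, (S1.1.orderIsoOfFin ((Finset.mem_powersetCard.mp S1.2).2) (σ1 k) : Fin N)
            = j := by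
          refine ⟨σ1.symm ((S1.1.orderIsoOfFin ((Finset.mem_powersetCard.mp S1.2).2)).symm
            ⟨j, hj⟩), ?_⟩
          rw [Equiv.apply_symm_apply, OrderIso.apply_symm_apply]
        obtain ⟨k, hk⟩ := this
        rw [hfun k] at hk
        rw [← hk]
        exact (S2.1.orderIsoOfFin ((Finset.mem_powersetCard.mp S2.2).2) (σ2 k)).2
      · intro hj
        have : ∃ k, (S2.1.orderIsoOfFin ((Finset.mem_powersetCard.mp S2.2).2) (σ2 k) : Fin N)
            = j := by
          refine ⟨σ2.symm ((S2.1.orderIsoOfFin ((Finset.mem_powersetCard.mp S2.2).2)).symm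
            ⟨j, hj⟩), ?_⟩
          rw [Equiv.apply_symm_apply, OrderIso.apply_symm_apply]
        obtain ⟨k, hk⟩ := this
        rw [← hfun k] at hk
        rw [← hk]
        exact (S1.1.orderIsoOfFin ((Finset.mem_powersetCard.mp S1.2).2) (σ1 k)).2
    subst hSS
    have hσ : σ1 = σ2 := by
      apply Equiv.ext
      intro k
      apply (S1.1.orderIsoOfFin ((Finset.mem_powersetCard.mp S1.2).2)).injective
      exact Subtype.coe_injective (hfun k)
    rw [hσ]
  · -- surjectivity
    intro f hf
    obtain ⟨hfPJ, htot⟩ := Finset.mem_filter.mp hf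
    have htot' : ∀ i, f i ≠ none := htot
    have hinj := (mem_PJ_iff.mp hfPJ).2
    set e : Fin M → Fin N := fun k => (f k).getD ⟨0, hN⟩ with he
    have hfe : ∀ k, f k = some (e k) := by
      intro k
      cases hfk : f k with
      | none => exact absurd hfk (htot' k)
      | some j => rw [he]; simp [hfk]
    have heinj : Function.Injective e := by
      intro k1 k2 hk
      apply hinj k1 k2 (e k1) (hfe k1)
      rw [hk]
      exact hfe k2
    set S : Finset (Fin N) := Finset.univ.image e with hS
    have hcard : S.card = M := by
      rw [hS, Finset.card_image_of_injective _ heinj, Finset.card_univ, Fintype.card_fin]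
    have hSmem : S ∈ Finset.powersetCard M (Finset.univ : Finset (Fin N)) :=
      Finset.mem_powersetCard.mpr ⟨Finset.subset_univ S, hcard⟩
    have hmemS : ∀ k, e k ∈ S := fun k => Finset.mem_image_of_mem e (Finset.mem_univ k)
    set g : Fin M → Fin M := fun k =>
      (S.orderIsoOfFin ((Finset.mem_powersetCard.mp hSmem).2)).symm ⟨e k, hmemS k⟩ with hg
    have hginj : Function.Injective g := by
      intro k1 k2 hk
      rw [hg] at hk
      simp only at hk
      have := (S.orderIsoOfFin ((Finset.mem_powersetCard.mp hSmem).2)).symm.injective hk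
      rw [Subtype.mk.injEq] at this
      exact heinj this
    set σ : Equiv.Perm (Fin M) := Equiv.ofBijective g (Finite.injective_iff_bijective.mp hginj)
      with hσ
    refine ⟨(⟨S, hSmem⟩, σ), Finset.mem_product.mpr ⟨Finset.mem_attach _ _, Finset.mem_univ _⟩,
      ?_⟩
    funext k
    show some ((S.orderIsoOfFin ((Finset.mem_powersetCard.mp hSmem).2) (σ k) : Fin N)) = f k
    have hσk : σ k = g k := rfl
    have : (S.orderIsoOfFin ((Finset.mem_powersetCard.mp hSmem).2)) (g k) = ⟨e k, hmemS k⟩ := by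
      rw [hg]
      exact (S.orderIsoOfFin _).apply_symm_apply _
    rw [hσk, this]
    exact (hfe k).symm
  · -- terms agree
    rintro ⟨S, σ⟩ -
    rw [mz]
    apply Finset.prod_congr rfl
    intro i _
    rfl


lemma lf_const (i : Fin M) (t : ℂ) : lf A i (fun _ => t) = (((∑ j, A i j : ℝ)) : ℂ) * t := by
  rw [lf]
  push_cast
  rw [← Finset.sum_mul]

/-- affine polynomial `z0 j + X * c j` -/
def affc (z0 c : Fin N → ℂ) (j : Fin N) : Polynomial ℂ :=
  Polynomial.C (z0 j) + Polynomial.X * Polynomial.C (c j)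

/-- `GK` along the affine line, as a polynomial in the line parameter -/
def Ppoly (z0 c : Fin N → ℂ) (ε : ℝ) : Polynomial ℂ :=
  ∑ f ∈ PJ M (Finset.univ : Finset (Fin N)), ∏ i,
    (f i).elim (Polynomial.C ((((∑ j, A i j : ℝ)) : ℂ) * (ε : ℂ)))
      (fun j => Polynomial.C ((A i j : ℂ)) * affc z0 c j)

lemma Ppoly_eval (z0 c : Fin N → ℂ) (ε : ℝ) (s : ℂ) :
    (Ppoly A z0 c ε).eval s = GK A Finset.univ (fun j => z0 j + s * c j) (fun _ => (ε : ℂ)) := by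
  rw [Ppoly, GK, Polynomial.eval_finset_sum]
  apply Finset.sum_congr rfl
  intro f _
  rw [Polynomial.eval_prod]
  apply Finset.prod_congr rfl
  intro i _
  cases hfi : f i with
  | none =>
    rw [tm, hfi]
    simp only [Option.elim, Polynomial.eval_C]
    rw [lf_const]
  | some j =>
    rw [tm, hfi]
    simp only [Option.elim, affc, Polynomial.eval_mul, Polynomial.eval_add, Polynomial.eval_C,
      Polynomial.eval_X]

lemma Ppoly_natDegree (z0 c : Fin N → ℂ) (ε : ℝ) : (Ppoly A z0 c ε).natDegree ≤ M := by
  rw [Ppoly]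
  apply Polynomial.natDegree_sum_le_of_forall_le
  intro f _
  apply le_trans (Polynomial.natDegree_prod_le _ _)
  calc ∑ i : Fin M, ((f i).elim (Polynomial.C ((((∑ j, A i j : ℝ)) : ℂ) * (ε : ℂ)))
        (fun j => Polynomial.C ((A i j : ℂ)) * affc z0 c j)).natDegree
      ≤ ∑ _i : Fin M, 1 := by
        apply Finset.sum_le_sum
        intro i _
        cases hfi : f i with
        | none =>
          simp only [Option.elim]
          rw [Polynomial.natDegree_C]
          exact Nat.zero_le 1
        | some j =>
          simp only [Option.elim]
          apply le_trans (Polynomial.natDegree_mul_le)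
          rw [Polynomial.natDegree_C, zero_add, affc]
          apply le_trans (Polynomial.natDegree_add_le _ _)
          simp only [Polynomial.natDegree_C]
          apply max_le (Nat.zero_le 1)
          apply le_trans (Polynomial.natDegree_mul_le)
          simp [Polynomial.natDegree_X, Polynomial.natDegree_C]
    _ = M := by simp

/-- `Tz` along the affine line, as a polynomial -/
def Tpoly (z0 c : Fin N → ℂ) : Polynomial ℂ :=
  ∑ f ∈ (PJ M (Finset.univ : Finset (Fin N))).filter (fun f => ∀ i, f i ≠ none), ∏ i,
    (f i).elim 0 (fun j => Polynomial.C ((A i j : ℂ)) * affc z0 c j)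

lemma Tpoly_eval (z0 c : Fin N → ℂ) (s : ℂ) :
    (Tpoly A z0 c).eval s = Tz A (fun j => z0 j + s * c j) := by
  rw [Tpoly, Tz, Polynomial.eval_finset_sum]
  apply Finset.sum_congr rfl
  intro f hf
  have htot : ∀ i, f i ≠ none := (Finset.mem_filter.mp hf).2
  rw [Polynomial.eval_prod, mz]
  apply Finset.prod_congr rfl
  intro i _
  cases hfi : f i with
  | none => exact absurd hfi (htot i)
  | some j =>
    simp only [Option.elim, Polynomial.eval_mul, Polynomial.eval_C, affc, Polynomial.eval_add,
      Polynomial.eval_X]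

/-- uniform bound for the error term -/
def CB (W : ℝ) : ℝ :=
  ∑ _f ∈ (PJ M (Finset.univ : Finset (Fin N))).filter (fun f => ¬ ∀ i, f i ≠ none),
    ∏ i : Fin M, ((∑ j, A i j) * (1 + W))

lemma CB_nonneg (hA : ∀ i j, 0 ≤ A i j) {W : ℝ} (hW : 0 ≤ W) : 0 ≤ CB A W := by
  apply Finset.sum_nonneg
  intro f _
  apply Finset.prod_nonneg
  intro i _
  have : (0:ℝ) ≤ ∑ j, A i j := Finset.sum_nonneg (fun j _ => hA i j)
  nlinarith

lemma Ez_bound (hA : ∀ i j, 0 ≤ A i j) (z : Fin N → ℂ) (t : ℂ) {W : ℝ} (hW : 0 ≤ W)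
    (hz : ∀ j, Complex.abs (z j) ≤ W) (ht : Complex.abs t ≤ 1) :
    Complex.abs (Ez A z t) ≤ CB A W := by
  rw [Ez, CB]
  apply le_trans (Complex.abs.sum_le _ _)
  apply Finset.sum_le_sum
  intro f _
  rw [map_mul, map_pow]
  have h1 : Complex.abs t ^ (kf f - 1) ≤ 1 := pow_le_one₀ (Complex.abs.nonneg t) ht
  have h2 : Complex.abs (mz A z f) ≤ ∏ i : Fin M, ((∑ j, A i j) * (1 + W)) := by
    rw [mz, map_prod]
    apply Finset.prod_le_prod
    · intro i _
      exact Complex.abs.nonneg _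
    · intro i _
      have hRnn : (0:ℝ) ≤ ∑ j, A i j := Finset.sum_nonneg (fun j _ => hA i j)
      cases hfi : f i with
      | none =>
        simp only [Option.elim, Complex.abs_ofReal]
        rw [abs_of_nonneg hRnn]
        nlinarith
      | some j =>
        simp only [Option.elim, map_mul, Complex.abs_ofReal]
        rw [abs_of_nonneg (hA i j)]
        have hAij : A i j ≤ ∑ j', A i j' :=
          Finset.single_le_sum (fun j' _ => hA i j') (Finset.mem_univ j)
        have := hz j
        have habs : (0:ℝ) ≤ Complex.abs (z j) := Complex.abs.nonneg _
        nlinarith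
  calc Complex.abs t ^ (kf f - 1) * Complex.abs (mz A z f)
      ≤ 1 * (∏ i : Fin M, ((∑ j, A i j) * (1 + W))) := by
        apply mul_le_mul h1 h2 (Complex.abs.nonneg _)
        norm_num
    _ = ∏ i : Fin M, ((∑ j, A i j) * (1 + W)) := one_mul _

lemma FApoly_zero_row {i₀ : Fin M} (h : ∀ j, A i₀ j = 0) : FApoly A = 0 := by
  rw [FApoly]
  apply Finset.sum_eq_zero
  intro S _
  have hper : permanent (Matrix.of fun i k =>
      A i ((S.1.orderIsoOfFin ((Finset.mem_powersetCard.mp S.2).2)) k)) = 0 := by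
    rw [permanent]
    apply Finset.sum_eq_zero
    intro σ _
    apply Finset.prod_eq_zero (Finset.mem_univ i₀)
    simp [h]
  rw [hper, map_zero, zero_mul]

end FAstab

theorem stmt1 {M N : ℕ} (hMN : M < N) (A : Matrix (Fin M) (Fin N) ℝ)
    (hA : ∀ i j, 0 ≤ A i j) :
    FApoly A = 0 ∨ Hstable (FApoly A) := by
  by_cases hF : FApoly A = 0
  · exact Or.inl hF
  right
  intro z0 hz0
  by_contra hval
  have hN : 0 < N := lt_of_le_of_lt (Nat.zero_le M) hMN
  -- all rows of A are nonzero
  have hrow : ∀ i, ∃ j, A i j ≠ 0 := by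
    by_contra h
    push_neg at h
    obtain ⟨i₀, h⟩ := h
    exact hF (FAstab.FApoly_zero_row A h)
  -- a point where FApoly does not vanish
  have hmapne : MvPolynomial.map (algebraMap ℝ ℂ) (FApoly A) ≠ 0 := by
    intro h
    exact hF (MvPolynomial.map_injective (algebraMap ℝ ℂ) (algebraMap ℝ ℂ).injective
      (by rw [h, map_zero]))
  obtain ⟨y₀, hy₀⟩ : ∃ y₀ : Fin N → ℂ,
      MvPolynomial.eval y₀ (MvPolynomial.map (algebraMap ℝ ℂ) (FApoly A)) ≠ 0 := by
    by_contra h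
    push_neg at h
    exact hmapne (MvPolynomial.funext (fun x => by rw [h x, map_zero]))
  have hy₀' : MvPolynomial.aeval y₀ (FApoly A) ≠ 0 := by
    rw [MvPolynomial.aeval_def, MvPolynomial.eval₂_eq_eval_map]
    exact hy₀
  set c : Fin N → ℂ := fun j => y₀ j - z0 j with hc
  -- choice of δ
  set B : ℝ := ∑ j, Complex.abs (c j) with hB
  have hB0 : 0 ≤ B := Finset.sum_nonneg (fun j _ => Complex.abs.nonneg _)
  obtain ⟨j₀, -, hj₀⟩ := Finset.exists_min_image Finset.univ (fun j => (z0 j).re)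
    ⟨⟨0, hN⟩, Finset.mem_univ _⟩
  set ρ : ℝ := (z0 j₀).re with hρ
  have hρ0 : 0 < ρ := hz0 j₀
  set δ : ℝ := min 1 (ρ / (2 * (B + 1))) with hδ
  have hδ0 : 0 < δ := by
    apply lt_min one_pos
    positivity
  have hδ1 : δ ≤ 1 := min_le_left _ _
  have hδρ : δ * (B + 1) ≤ ρ / 2 := by
    have h2 : δ ≤ ρ / (2 * (B + 1)) := min_le_right _ _
    have h3 := (le_div_iff₀ (by positivity : (0:ℝ) < 2 * (B + 1))).mp h2
    nlinarith
  have hline : ∀ s : ℂ, Complex.abs s ≤ δ → ∀ j, 0 < (z0 j + s * c j).re := by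
    intro s hs j
    rw [Complex.add_re]
    have h1 : ρ ≤ (z0 j).re := hj₀ j (Finset.mem_univ j)
    have h2 : -(Complex.abs (s * c j)) ≤ (s * c j).re :=
      neg_le_of_abs_le (Complex.abs_re_le_norm _)
    have h3 : Complex.abs (s * c j) ≤ δ * (B + 1) := by
      rw [map_mul]
      have hcj : Complex.abs (c j) ≤ B :=
        Finset.single_le_sum (fun j' _ => Complex.abs.nonneg (c j')) (Finset.mem_univ j)
      have := Complex.abs.nonneg s
      nlinarith
    linarith
  -- uniform bound on coordinates along the line
  set W : ℝ := ∑ j, (Complex.abs (z0 j) + Complex.abs (c j)) with hW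
  have hW0 : 0 ≤ W :=
    Finset.sum_nonneg (fun j _ => by positivity)
  have hWb : ∀ s : ℂ, Complex.abs s ≤ 1 → ∀ j, Complex.abs (z0 j + s * c j) ≤ W := by
    intro s hs j
    apply le_trans (Complex.abs.add_le _ _)
    have h1 : Complex.abs (s * c j) ≤ Complex.abs (c j) := by
      rw [map_mul]
      have := Complex.abs.nonneg (c j)
      nlinarith
    have h2 : Complex.abs (z0 j) + Complex.abs (c j)
        ≤ ∑ j', (Complex.abs (z0 j') + Complex.abs (c j')) :=
      Finset.single_le_sum (f := fun j' => Complex.abs (z0 j') + Complex.abs (c j'))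
        (fun j' _ => by positivity) (Finset.mem_univ j)
    rw [hW]
    linarith
  set D : ℝ := FAstab.CB A W with hD
  have hD0 : 0 ≤ D := FAstab.CB_nonneg A hA hW0
  set Ktot : ℝ := (3/2 : ℝ) ^ M * D + D with hKtot
  have hKtot0 : 0 ≤ Ktot := by positivity
  -- Tz vanishes at z0
  have hTz0 : FAstab.Tz A z0 = 0 := by
    rw [← FAstab.aeval_FApoly A hN z0, hval]
  -- the key estimate
  have hkey : ∀ ε : ℝ, 0 < ε → ε ≤ 1 → ∀ s : ℂ, Complex.abs s ≤ δ / 2 →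
      Complex.abs ((FAstab.Tpoly A z0 c).eval s) ≤ ε * Ktot := by
    intro ε hε hε1 s hs
    have hPne : ∀ s' : ℂ, Complex.abs s' ≤ δ → (FAstab.Ppoly A z0 c ε).eval s' ≠ 0 := by
      intro s' hs'
      rw [FAstab.Ppoly_eval]
      apply FAstab.GK_ne_zero A hA hrow Finset.univ _ _ (hline s' hs')
      intro j
      simpa using hε
    have hroots : ∀ r : ℂ, (FAstab.Ppoly A z0 c ε).IsRoot r → δ < Complex.abs r := by
      intro r hr
      by_contra h
      push_neg at h
      exact hPne r h hr
    have hPneq : FAstab.Ppoly A z0 c ε ≠ 0 := by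
      intro h
      apply hPne 0 (by simpa using hδ0.le)
      rw [h, Polynomial.eval_zero]
    have hvb := value_bound (FAstab.Ppoly A z0 c ε) hδ0 hroots hs
    have hvb2 : Complex.abs ((FAstab.Ppoly A z0 c ε).eval s)
        ≤ (3/2 : ℝ) ^ M * Complex.abs ((FAstab.Ppoly A z0 c ε).eval 0) := by
      apply le_trans hvb
      apply mul_le_mul_of_nonneg_right _ (Complex.abs.nonneg _)
      apply pow_le_pow_right₀ (by norm_num) (FAstab.Ppoly_natDegree A z0 c ε)
    -- value at 0
    have hzero : (fun j => z0 j + (0:ℂ) * c j) = z0 := by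
      funext j
      simp
    have hε' : Complex.abs (ε : ℂ) ≤ 1 := by
      rw [Complex.abs_ofReal, abs_of_pos hε]
      exact hε1
    have hP0 : Complex.abs ((FAstab.Ppoly A z0 c ε).eval 0) ≤ ε * D := by
      rw [FAstab.Ppoly_eval, hzero, FAstab.GK_onev, hTz0, zero_add, map_mul,
        Complex.abs_ofReal, abs_of_pos hε]
      apply mul_le_mul_of_nonneg_left _ hε.le
      exact FAstab.Ez_bound A hA z0 _ hW0 (fun j => by
        have := hWb 0 (by simp) j
        simpa using this) hε'
    -- value at s
    have hTs : (FAstab.Tpoly A z0 c).eval s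
        = (FAstab.Ppoly A z0 c ε).eval s
          - (ε : ℂ) * FAstab.Ez A (fun j => z0 j + s * c j) (ε : ℂ) := by
      rw [FAstab.Ppoly_eval, FAstab.GK_onev, FAstab.Tpoly_eval]
      ring
    rw [hTs]
    have habs : Complex.abs ((FAstab.Ppoly A z0 c ε).eval s
          - (ε : ℂ) * FAstab.Ez A (fun j => z0 j + s * c j) (ε : ℂ))
        ≤ Complex.abs ((FAstab.Ppoly A z0 c ε).eval s)
          + Complex.abs ((ε : ℂ) * FAstab.Ez A (fun j => z0 j + s * c j) (ε : ℂ)) := by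
      apply AbsoluteValue.sub_le_add
    have hEs : Complex.abs ((ε : ℂ) * FAstab.Ez A (fun j => z0 j + s * c j) (ε : ℂ))
        ≤ ε * D := by
      rw [map_mul, Complex.abs_ofReal, abs_of_pos hε]
      apply mul_le_mul_of_nonneg_left _ hε.le
      apply FAstab.Ez_bound A hA _ _ hW0 _ hε'
      intro j
      apply hWb s (le_trans hs (by linarith)) j
    calc Complex.abs _ ≤ _ + _ := habs
      _ ≤ (3/2 : ℝ) ^ M * (ε * D) + ε * D := by
          apply add_le_add (le_trans hvb2 _) hEs
          apply mul_le_mul_of_nonneg_left hP0 (by positivity)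
      _ = ε * Ktot := by rw [hKtot]; ring
  -- conclude that Tpoly vanishes on a disc
  have hvanish : ∀ s : ℂ, Complex.abs s ≤ δ / 2 → (FAstab.Tpoly A z0 c).eval s = 0 := by
    intro s hs
    by_contra h
    set v : ℝ := Complex.abs ((FAstab.Tpoly A z0 c).eval s) with hv
    have hv0 : 0 < v := by
      rw [hv]
      exact AbsoluteValue.pos _ h
    set ε : ℝ := min 1 (v / (2 * (Ktot + 1))) with hε
    have hε0 : 0 < ε := lt_min one_pos (by positivity)
    have hε1 : ε ≤ 1 := min_le_left _ _
    have := hkey ε hε0 hε1 s hs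
    have hεv : ε ≤ v / (2 * (Ktot + 1)) := min_le_right _ _
    have h5 : v ≤ ε * Ktot := this
    have h6 := (le_div_iff₀ (by positivity : (0:ℝ) < 2 * (Ktot + 1))).mp hεv
    nlinarith
  -- Tpoly is zero as a polynomial
  have hTzero : FAstab.Tpoly A z0 c = 0 := by
    apply Polynomial.eq_zero_of_infinite_isRoot
    apply Set.Infinite.mono (s := (fun r : ℝ => (r : ℂ)) '' Set.Icc 0 (δ / 2))
    · rintro x ⟨r, hr, rfl⟩
      apply hvanish
      rw [Complex.abs_ofReal, abs_of_nonneg hr.1]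
      exact hr.2
    · apply Set.Infinite.image
      · intro a _ b _ hab
        exact Complex.ofReal_injective hab
      · exact Set.Icc_infinite (by linarith)
  -- contradiction with the value at 1
  have harg : (fun j => z0 j + 1 * c j) = y₀ := by
    funext j
    simp only [hc]
    ring
  have h1 : (FAstab.Tpoly A z0 c).eval 1 = MvPolynomial.aeval y₀ (FApoly A) := by
    rw [FAstab.Tpoly_eval, harg, ← FAstab.aeval_FApoly A hN]
  rw [hTzero] at h1
  simp only [Polynomial.eval_zero] at h1
  exact hy₀' h1.symm
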